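/- Let A be definite and irreducible, and let x = ∏_k ((A*)_{·k})^{λ_k} componentwise with λ_k > 0 and Σ_k λ_k = 1 (a positive log-convex combination of all columns of A*). Then for X = diag(x), the matrix X⁻¹AX is strictly visualized. -/

import Mathlib

open Finset

/-- Max-times matrix product: `(A ⊗ B) i j = max_k (A i k * B k j)`. -/
noncomputable def mProd {n : ℕ} (A B : Matrix (Fin n) (Fin n) NNReal) :
    Matrix (Fin n) (Fin n) NNReal :=
  fun i j => univ.sup fun k => A i k * B k j

/-- Max-algebraic matrix powers, `mPow A 0 = I`. -/
noncomputable def mPow {n : ℕ} (A : Matrix (Fin n) (Fin n) NNReal) :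
    ℕ → Matrix (Fin n) (Fin n) NNReal
  | 0 => fun i j => if i = j then 1 else 0
  | k + 1 => mProd (mPow A k) A

/-- Kleene star `A* = I ⊕ A ⊕ ... ⊕ A^{n-1}` in max algebra. -/
noncomputable def klStar {n : ℕ} (A : Matrix (Fin n) (Fin n) NNReal) :
    Matrix (Fin n) (Fin n) NNReal :=
  fun i j => (Finset.range n).sup fun k => mPow A k i j

/-- Partial "sums" `I ⊕ A ⊕ ... ⊕ A^m` of the Kleene star series. -/
noncomputable def kPartial {n : ℕ} (A : Matrix (Fin n) (Fin n) NNReal) (m : ℕ) :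
    Matrix (Fin n) (Fin n) NNReal :=
  fun i j => (Finset.range (m + 1)).sup fun k => mPow A k i j

/-- The weight of the cycle given by the list `l` (with wrap-around edge). -/
def cycleWeight {n : ℕ} (A : Matrix (Fin n) (Fin n) NNReal) (l : List (Fin n)) : NNReal :=
  ((l.zip (l.rotate 1)).map fun p => A p.1 p.2).prod

/-- The geometric mean of a cycle: `w(σ,A)^{1/k}`. -/
noncomputable def cycleMean {n : ℕ} (A : Matrix (Fin n) (Fin n) NNReal) (l : List (Fin n)) :
    NNReal :=
  (cycleWeight A l) ^ ((l.length : ℝ)⁻¹)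

/-- The maximum cycle geometric mean `λ(A)`. -/
noncomputable def maxCycleMean {n : ℕ} (A : Matrix (Fin n) (Fin n) NNReal) : NNReal :=
  sSup {x | ∃ l : List (Fin n), l ≠ [] ∧ x = cycleMean A l}

/-- `(i,j)` is a critical edge: it lies on a cycle attaining `λ(A)`. -/
def criticalEdge {n : ℕ} (A : Matrix (Fin n) (Fin n) NNReal) (i j : Fin n) : Prop :=
  ∃ l : List (Fin n), l ≠ [] ∧ cycleMean A l = maxCycleMean A ∧ (i, j) ∈ l.zip (l.rotate 1)

/-- Max-algebraic matrix-vector product. -/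
noncomputable def mVec {n : ℕ} (A : Matrix (Fin n) (Fin n) NNReal) (x : Fin n → NNReal) :
    Fin n → NNReal :=
  fun i => univ.sup fun j => A i j * x j

section Aux

variable {n : ℕ} (A : Matrix (Fin n) (Fin n) NNReal)

/-- Weight of a walk given by its list of vertices. -/
def chainProd : List (Fin n) → NNReal
  | [] => 1
  | [_] => 1
  | a :: b :: l => A a b * chainProd (b :: l)

@[simp] lemma chainProd_nil : chainProd A [] = 1 := rfl
@[simp] lemma chainProd_singleton (a : Fin n) : chainProd A [a] = 1 := rfl
@[simp] lemma chainProd_cons_cons (a b : Fin n) (l : List (Fin n)) :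
    chainProd A (a :: b :: l) = A a b * chainProd A (b :: l) := rfl

lemma chainProd_cons_of_head (a : Fin n) {l : List (Fin n)} {i : Fin n}
    (h : l.head? = some i) : chainProd A (a :: l) = A a i * chainProd A l := by
  cases l with
  | nil => simp at h
  | cons b t => simp only [List.head?_cons, Option.some.injEq] at h; subst h; rfl

lemma chainProd_append_cons : ∀ (s : List (Fin n)) (a : Fin n) (t : List (Fin n)),
    chainProd A (s ++ a :: t) = chainProd A (s ++ [a]) * chainProd A (a :: t) := by
  intro s
  induction s with
  | nil => intro a t; simp
  | cons x s ih =>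
    intro a t
    cases s with
    | nil => simp [mul_assoc]
    | cons y s' =>
      have := ih a t
      simp only [List.cons_append, chainProd_cons_cons] at this ⊢
      rw [this, mul_assoc]

lemma chainProd_splice {l1 l2 : List (Fin n)} {m : Fin n}
    (h1 : l1.getLast? = some m) (h2 : l2.head? = some m) :
    chainProd A (l1 ++ l2.tail) = chainProd A l1 * chainProd A l2 := by
  cases l2 with
  | nil => simp at h2
  | cons b t =>
    simp only [List.head?_cons, Option.some.injEq] at h2; subst h2
    cases t with
    | nil => simp
    | cons u t' =>
      have hne : l1 ≠ [] := by rintro rfl; simp at h1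
      have hgl : l1.getLast hne = b := by
        have := List.getLast?_eq_some_getLast hne
        rw [this] at h1; exact (Option.some.injEq _ _).mp h1
      conv_lhs => rw [← List.dropLast_append_getLast hne, hgl]
      conv_rhs => rw [← List.dropLast_append_getLast hne, hgl]
      rw [List.append_assoc, List.singleton_append, List.tail_cons,
        chainProd_append_cons A l1.dropLast b (u :: t'),
        chainProd_append_cons A l1.dropLast b []]

lemma chainProd_concat {l : List (Fin n)} {k : Fin n} (h : l.getLast? = some k) (b : Fin n) :
    chainProd A (l ++ [b]) = chainProd A l * A k b := by
  have := chainProd_splice A (l1 := l) (l2 := [k, b]) h rfl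
  simpa using this

lemma getLast?_append_of {α : Type*} (s : List α) {t : List α} {j : α}
    (h : t.getLast? = some j) : (s ++ t).getLast? = some j := by
  rw [List.getLast?_append, h]; rfl

lemma chainProd_zip : ∀ (l : List (Fin n)) (a : Fin n),
    ((l.zip (l.tail ++ [a])).map fun p => A p.1 p.2).prod = chainProd A (l ++ [a]) := by
  intro l
  induction l with
  | nil => intro a; simp
  | cons b t ih =>
    intro a
    cases t with
    | nil => simp
    | cons c t' =>
      have := ih a
      simp only [List.tail_cons, List.cons_append, List.zip_cons_cons, List.map_cons,
        List.prod_cons, chainProd_cons_cons] at this ⊢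
      rw [this]

lemma cycleWeight_eq_chainProd (a : Fin n) (t : List (Fin n)) :
    cycleWeight A (a :: t) = chainProd A ((a :: t) ++ [a]) := by
  rw [cycleWeight, show (1 : ℕ) = 0 + 1 from rfl, List.rotate_cons_succ, List.rotate_zero]
  have := chainProd_zip A (a :: t) a
  simpa using this

lemma cycleWeight_eq_rpow {l : List (Fin n)} (hl : l ≠ []) :
    cycleWeight A l = (cycleMean A l) ^ (l.length : ℝ) := by
  have hlen : (l.length : ℝ) ≠ 0 := by
    simp [List.length_eq_zero_iff, hl]
  rw [cycleMean, ← NNReal.rpow_mul, inv_mul_cancel₀ hlen, NNReal.rpow_one]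

lemma cycleWeight_le_one (hdef : maxCycleMean A = 1) {l : List (Fin n)} (hl : l ≠ []) :
    cycleWeight A l ≤ 1 := by
  have hb : BddAbove {x | ∃ l : List (Fin n), l ≠ [] ∧ x = cycleMean A l} := by
    by_contra h
    rw [maxCycleMean, csSup_of_not_bddAbove h, csSup_empty] at hdef
    simp at hdef
  have hm : cycleMean A l ≤ 1 := by
    rw [maxCycleMean] at hdef
    exact hdef ▸ le_csSup hb ⟨l, hl, rfl⟩
  rw [cycleWeight_eq_rpow A hl]
  calc (cycleMean A l) ^ (l.length : ℝ) ≤ (1 : NNReal) ^ (l.length : ℝ) :=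
        NNReal.rpow_le_rpow hm (by positivity)
    _ = 1 := NNReal.one_rpow _

lemma chainProd_closed_le_one (hdef : maxCycleMean A = 1) :
    ∀ {l : List (Fin n)} {i : Fin n}, l.head? = some i → l.getLast? = some i →
      chainProd A l ≤ 1 := by
  intro l i hh hl
  cases l with
  | nil => simp at hh
  | cons a t =>
    simp only [List.head?_cons, Option.some.injEq] at hh; subst hh
    cases t with
    | nil => simp
    | cons b t' =>
      have h1 : (b :: t') ≠ [] := by simp
      have h2 : (b :: t').getLast? = some a := by
        rw [← List.getLast?_cons_cons (a := a)]; exact hl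
      have h3 : (b :: t').getLast h1 = a := by
        have := List.getLast?_eq_some_getLast h1
        rw [this] at h2; exact (Option.some.injEq _ _).mp h2
      have h4 : (b :: t').dropLast ++ [a] = b :: t' := by
        conv_rhs => rw [← List.dropLast_append_getLast h1, h3]
      calc chainProd A (a :: b :: t')
          = chainProd A ((a :: (b :: t').dropLast) ++ [a]) := by
            rw [List.cons_append, h4]
        _ = cycleWeight A (a :: (b :: t').dropLast) :=
            (cycleWeight_eq_chainProd A _ _).symm
        _ ≤ 1 := cycleWeight_le_one A hdef (by simp)

lemma chainProd_le_mPow (l : List (Fin n)) : ∀ i j : Fin n,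
    l.head? = some i → l.getLast? = some j →
    chainProd A l ≤ mPow A (l.length - 1) i j := by
  induction l using List.reverseRecOn with
  | nil => intro i j h; simp at h
  | append_singleton l b ih =>
    intro i j hh hl
    have hj : j = b := by
      rw [List.getLast?_concat] at hl
      exact ((Option.some.injEq _ _).mp hl).symm
    subst hj
    cases l with
    | nil =>
      simp only [List.nil_append, List.head?_cons, Option.some.injEq] at hh
      subst hh
      simp [mPow]
    | cons a t =>
      have hne : (a :: t) ≠ [] := by simp
      have hkey : (a :: t).getLast? = some ((a :: t).getLast hne) :=
        List.getLast?_eq_some_getLast _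
      have hi : (a :: t).head? = some i := by
        rw [List.cons_append, List.head?_cons] at hh
        rw [List.head?_cons]; exact hh
      have hlen : ((a :: t) ++ [j]).length - 1 = t.length + 1 := by simp
      rw [hlen]
      calc chainProd A ((a :: t) ++ [j])
          = chainProd A (a :: t) * A ((a :: t).getLast hne) j :=
            chainProd_concat A hkey j
        _ ≤ mPow A ((a :: t).length - 1) i ((a :: t).getLast hne) * A ((a :: t).getLast hne) j :=
            mul_le_mul_left (ih i _ hi hkey) _
        _ ≤ mPow A (t.length + 1) i j := by
            have : (a :: t).length - 1 = t.length := by simp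
            rw [this]
            have h3 : mPow A (t.length + 1) i j
                = univ.sup fun k => mPow A t.length i k * A k j := rfl
            rw [h3]
            exact Finset.le_sup (f := fun k => mPow A t.length i k * A k j) (Finset.mem_univ ((a :: t).getLast hne))

lemma exists_dup_split : ∀ {l : List (Fin n)}, ¬ l.Nodup →
    ∃ (v : Fin n) (l1 l2 l3 : List (Fin n)), l = l1 ++ v :: l2 ++ v :: l3 := by
  intro l
  induction l with
  | nil => intro h; simp at h
  | cons a t ih =>
    intro h
    by_cases ha : a ∈ t
    · obtain ⟨s, r, rfl⟩ := List.append_of_mem ha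
      exact ⟨a, [], s, r, by simp⟩
    · have ht : ¬ t.Nodup := by
        simp only [List.nodup_cons, ha, not_false_iff, true_and] at h
        exact h
      obtain ⟨v, l1, l2, l3, rfl⟩ := ih ht
      exact ⟨v, a :: l1, l2, l3, by simp⟩

lemma chainProd_le_klStar (hdef : maxCycleMean A = 1) :
    ∀ (N : ℕ) (l : List (Fin n)) (i j : Fin n), l.length ≤ N →
      l.head? = some i → l.getLast? = some j → chainProd A l ≤ klStar A i j := by
  intro N
  induction N using Nat.strong_induction_on with
  | _ N ihN =>
  intro l i j hlen hh hl
  by_cases hn : l.length ≤ n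
  · have hpos : l ≠ [] := by rintro rfl; simp at hh
    have h1 : 1 ≤ l.length := List.length_pos_iff.mpr hpos
    refine (chainProd_le_mPow A l i j hh hl).trans ?_
    have h3 : klStar A i j = (Finset.range n).sup fun k => mPow A k i j := rfl
    rw [h3]
    have hmem : l.length - 1 ∈ Finset.range n := Finset.mem_range.mpr (by omega)
    exact Finset.le_sup (f := fun k => mPow A k i j) hmem
  · have hnd : ¬ l.Nodup := by
      intro hnd
      exact hn (hnd.length_le_card.trans_eq (by simp))
    obtain ⟨v, l1, l2, l3, rfl⟩ := exists_dup_split hnd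
    have hll : l1 ++ v :: l2 ++ v :: l3 = l1 ++ v :: (l2 ++ v :: l3) := by simp
    rw [hll] at hlen hh hl hn ⊢
    have e1 : chainProd A (l1 ++ v :: (l2 ++ v :: l3)) =
        chainProd A (l1 ++ [v]) * chainProd A (v :: (l2 ++ v :: l3)) :=
      chainProd_append_cons A l1 v (l2 ++ v :: l3)
    have e2 : chainProd A (v :: (l2 ++ v :: l3)) =
        chainProd A ((v :: l2) ++ [v]) * chainProd A (v :: l3) := by
      have := chainProd_append_cons A (v :: l2) v l3
      simpa using this
    have e3 : chainProd A ((v :: l2) ++ [v]) ≤ 1 :=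
      chainProd_closed_le_one A hdef (by simp) (List.getLast?_concat)
    have e4 : chainProd A (l1 ++ [v]) * chainProd A (v :: l3) =
        chainProd A (l1 ++ v :: l3) := (chainProd_append_cons A l1 v l3).symm
    have hle : chainProd A (l1 ++ v :: (l2 ++ v :: l3)) ≤ chainProd A (l1 ++ v :: l3) := by
      rw [e1, e2, ← e4]
      calc chainProd A (l1 ++ [v]) * (chainProd A ((v :: l2) ++ [v]) * chainProd A (v :: l3))
          ≤ chainProd A (l1 ++ [v]) * (1 * chainProd A (v :: l3)) := by
            exact mul_le_mul_right (mul_le_mul_left e3 _) _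
        _ = chainProd A (l1 ++ [v]) * chainProd A (v :: l3) := by rw [one_mul]
    refine hle.trans ?_
    have hNpos : 1 ≤ N := by
      have : n < (l1 ++ v :: (l2 ++ v :: l3)).length := by omega
      omega
    refine ihN (N - 1) (by omega) (l1 ++ v :: l3) i j ?_ ?_ ?_
    · have := hlen; simp only [List.length_append, List.length_cons] at this ⊢; omega
    · have h5 : (l1 ++ v :: (l2 ++ v :: l3)).head? = (l1 ++ v :: l3).head? := by
        rw [List.head?_append, List.head?_append]; rfl
      rw [← h5]; exact hh
    · have h6 : (l1 ++ v :: (l2 ++ v :: l3)).getLast? = some j := hl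
      have h7 : (v :: (l2 ++ v :: l3)).getLast? = some j := by
        rcases List.getLast?_append.symm.trans h6 with h8
        have h9 : (v :: (l2 ++ v :: l3)).getLast? =
            some ((v :: (l2 ++ v :: l3)).getLast (by simp)) := List.getLast?_eq_some_getLast _
        rw [h9] at h8 ⊢
        simpa using h8
      have hw := List.getLast?_eq_some_getLast (l := v :: l3) (by simp)
      have h10 : (v :: l3).getLast? = some j := by
        have ha : (l2 ++ v :: l3).getLast? = some ((v :: l3).getLast (by simp)) :=
          getLast?_append_of l2 hw
        have hb := getLast?_append_of [v] ha
        simp only [List.singleton_append] at hb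
        rw [hb] at h7
        rw [hw]; exact h7
      exact getLast?_append_of l1 h10

lemma mPow_exists_walk : ∀ (m : ℕ) (i j : Fin n), mPow A m i j = 0 ∨
    ∃ l : List (Fin n), l.head? = some i ∧ l.getLast? = some j ∧
      chainProd A l = mPow A m i j := by
  intro m
  induction m with
  | zero =>
    intro i j
    by_cases h : i = j
    · subst h
      exact Or.inr ⟨[i], rfl, rfl, by simp [mPow]⟩
    · exact Or.inl (by simp [mPow, h])
  | succ m ih =>
    intro i j
    have hne : (univ : Finset (Fin n)).Nonempty := ⟨i, mem_univ i⟩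
    obtain ⟨t, -, ht⟩ := Finset.exists_mem_eq_sup univ hne (fun t => mPow A m i t * A t j)
    have hstep : mPow A (m + 1) i j = mPow A m i t * A t j := ht
    rcases ih i t with h0 | ⟨l, h1, h2, h3⟩
    · exact Or.inl (by rw [hstep, h0, zero_mul])
    · refine Or.inr ⟨l ++ [j], ?_, List.getLast?_concat, ?_⟩
      · rw [List.head?_append, h1]; rfl
      · rw [chainProd_concat A h2 j, h3, hstep]

lemma mPow_le_klStar (hdef : maxCycleMean A = 1) (m : ℕ) (i j : Fin n) :
    mPow A m i j ≤ klStar A i j := by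
  rcases mPow_exists_walk A m i j with h | ⟨l, h1, h2, h3⟩
  · rw [h]; exact zero_le
  · rw [← h3]; exact chainProd_le_klStar A hdef l.length l i j le_rfl h1 h2

lemma klStar_diag (hdef : maxCycleMean A = 1) (i : Fin n) : klStar A i i = 1 := by
  apply le_antisymm
  · apply Finset.sup_le
    intro m _
    rcases mPow_exists_walk A m i i with h | ⟨l, h1, h2, h3⟩
    · rw [h]; exact zero_le_one
    · rw [← h3]; exact chainProd_closed_le_one A hdef h1 h2
  · have h0 : mPow A 0 i i = 1 := by simp [mPow]
    calc (1 : NNReal) = mPow A 0 i i := h0.symm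
      _ ≤ klStar A i i := Finset.le_sup (f := fun k => mPow A k i i)
          (Finset.mem_range.mpr i.pos)

lemma klStar_attained (i j : Fin n) : ∃ m, klStar A i j = mPow A m i j := by
  obtain ⟨m, -, hm⟩ := Finset.exists_mem_eq_sup (Finset.range n)
    ⟨0, Finset.mem_range.mpr i.pos⟩ (fun m => mPow A m i j)
  exact ⟨m, hm⟩

lemma klStar_walk (i j : Fin n) : klStar A i j = 0 ∨
    ∃ l : List (Fin n), l.head? = some i ∧ l.getLast? = some j ∧
      chainProd A l = klStar A i j := by
  obtain ⟨m, hm⟩ := klStar_attained A i j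
  rcases mPow_exists_walk A m i j with h | ⟨l, h1, h2, h3⟩
  · exact Or.inl (hm.trans h)
  · exact Or.inr ⟨l, h1, h2, h3.trans hm.symm⟩

lemma klStar_trans (hdef : maxCycleMean A = 1) (i k j : Fin n) :
    klStar A i k * klStar A k j ≤ klStar A i j := by
  rcases klStar_walk A i k with h1 | ⟨l1, h1h, h1l, h1p⟩
  · rw [h1, zero_mul]; exact zero_le
  rcases klStar_walk A k j with h2 | ⟨l2, h2h, h2l, h2p⟩
  · rw [h2, mul_zero]; exact zero_le
  rw [← h1p, ← h2p, ← chainProd_splice A h1l h2h]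
  apply chainProd_le_klStar A hdef (l1 ++ l2.tail).length _ i j le_rfl
  · rw [List.head?_append, h1h]; rfl
  · cases l2 with
    | nil => simp at h2h
    | cons b t =>
      simp only [List.head?_cons, Option.some.injEq] at h2h
      cases t with
      | nil =>
        have hbj : b = j := by simpa using h2l
        rw [List.tail_cons, List.append_nil, h1l, ← h2h, hbj]
      | cons u t' =>
        rw [List.getLast?_cons_cons] at h2l
        rw [List.tail_cons]
        exact getLast?_append_of l1 h2l

lemma mul_klStar_le (hdef : maxCycleMean A = 1) (i j k : Fin n) :
    A i j * klStar A j k ≤ klStar A i k := by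
  rcases klStar_walk A j k with h1 | ⟨l, h1h, h1l, h1p⟩
  · rw [h1, mul_zero]; exact zero_le
  rw [← h1p, ← chainProd_cons_of_head A i h1h]
  apply chainProd_le_klStar A hdef (i :: l).length _ i k le_rfl rfl
  have hne : l ≠ [] := by rintro rfl; simp at h1h
  have : (i :: l) = [i] ++ l := rfl
  rw [this]
  exact getLast?_append_of [i] h1l

lemma klStar_pos (hdef : maxCycleMean A = 1)
    (hirr : ∀ i j : Fin n, i ≠ j → ∃ k : ℕ, 0 < mPow A k i j) (i k : Fin n) :
    0 < klStar A i k := by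
  by_cases h : i = k
  · subst h; rw [klStar_diag A hdef]; exact zero_lt_one
  · obtain ⟨m, hm⟩ := hirr i k h
    exact hm.trans_le (mPow_le_klStar A hdef m i k)

lemma zip_edge_split : ∀ (l : List (Fin n)) (a i j : Fin n),
    (i, j) ∈ l.zip (l.tail ++ [a]) → ∃ u v, l ++ [a] = u ++ i :: j :: v := by
  intro l
  induction l with
  | nil => intro a i j h; simp at h
  | cons b t ih =>
    intro a i j hm
    cases t with
    | nil =>
      simp only [List.tail_cons, List.nil_append, List.zip_cons_cons, List.zip_nil_left,
        List.mem_cons, List.not_mem_nil, or_false, Prod.mk.injEq] at hm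
      obtain ⟨rfl, rfl⟩ := hm
      exact ⟨[], [], by simp⟩
    | cons c t' =>
      simp only [List.tail_cons, List.cons_append, List.zip_cons_cons, List.mem_cons,
        Prod.mk.injEq] at hm
      rcases hm with ⟨rfl, rfl⟩ | hm'
      · exact ⟨[], t' ++ [a], by simp⟩
      · have hm'' : (i, j) ∈ (c :: t').zip ((c :: t').tail ++ [a]) := by
          simpa using hm'
        obtain ⟨u, v, huv⟩ := ih a i j hm''
        refine ⟨b :: u, v, ?_⟩
        simp only [List.cons_append, huv]

lemma cycleMean_one_weight {l : List (Fin n)} (hl : l ≠ []) (h : cycleMean A l = 1) :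
    cycleWeight A l = 1 := by
  rw [cycleWeight_eq_rpow A hl, h, NNReal.one_rpow]

lemma crit_one (hdef : maxCycleMean A = 1) {i j : Fin n} (h : criticalEdge A i j) :
    A i j * klStar A j i = 1 := by
  obtain ⟨l, hl, hmean, hmem⟩ := h
  rw [hdef] at hmean
  have hw : cycleWeight A l = 1 := cycleMean_one_weight A hl hmean
  obtain ⟨a, t, rfl⟩ : ∃ a t, l = a :: t := by
    cases l with
    | nil => exact absurd rfl hl
    | cons a t => exact ⟨a, t, rfl⟩
  rw [show (1 : ℕ) = 0 + 1 from rfl, List.rotate_cons_succ, List.rotate_zero] at hmem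
  have hmem' : (i, j) ∈ (a :: t).zip ((a :: t).tail ++ [a]) := by simpa using hmem
  obtain ⟨u, v, huv⟩ := zip_edge_split (a :: t) a i j hmem'
  have hlast : ((a :: t) ++ [a]).getLast? = some a := List.getLast?_concat
  have hhead : ((a :: t) ++ [a]).head? = some a := rfl
  -- last of (j :: v) is a
  have hA_last : (j :: v).getLast? = some a := by
    rw [huv] at hlast
    have h1 : (u ++ i :: j :: v).getLast? = (j :: v).getLast? := by
      have h2 := List.getLast?_eq_some_getLast (l := j :: v) (by simp)
      rw [h2]
      have h3 : (i :: j :: v).getLast? = some ((j :: v).getLast (by simp)) := by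
        rw [List.getLast?_cons_cons]; exact h2
      exact getLast?_append_of u h3
    rw [h1] at hlast; exact hlast
  -- head of (u ++ [i]) is a
  have hB_head : (u ++ [i]).head? = some a := by
    rw [huv] at hhead
    cases u with
    | nil => simpa using hhead
    | cons p q =>
      simp only [List.cons_append, List.head?_cons] at hhead ⊢
      exact hhead
  -- splice walk from j to i
  have hsplice := chainProd_splice A hA_last hB_head
  have hW_head : ((j :: v) ++ (u ++ [i]).tail).head? = some j := by
    rw [List.head?_append]; rfl
  have hW_last : ((j :: v) ++ (u ++ [i]).tail).getLast? = some i := by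
    cases u with
    | nil =>
      have hia : i = a := by simpa using hB_head
      rw [hia]
      simpa using hA_last
    | cons p q =>
      have htl : ((p :: q) ++ [i]).tail = q ++ [i] := by simp
      rw [htl]
      exact getLast?_append_of _ (List.getLast?_concat)
  have hWle : chainProd A ((j :: v) ++ (u ++ [i]).tail) ≤ klStar A j i :=
    chainProd_le_klStar A hdef _ _ j i le_rfl hW_head hW_last
  -- total weight
  have htot : A i j * chainProd A ((j :: v) ++ (u ++ [i]).tail) = 1 := by
    rw [hsplice]
    have e1 : chainProd A ((a :: t) ++ [a]) = 1 := by
      rw [← cycleWeight_eq_chainProd]; exact hw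
    rw [huv] at e1
    rw [chainProd_append_cons A u i (j :: v), chainProd_cons_cons] at e1
    calc A i j * (chainProd A (j :: v) * chainProd A (u ++ [i]))
        = chainProd A (u ++ [i]) * (A i j * chainProd A (j :: v)) := by ring
      _ = 1 := e1
  apply le_antisymm
  · calc A i j * klStar A j i ≤ klStar A i i := mul_klStar_le A hdef i j i
      _ = 1 := klStar_diag A hdef i
  · rw [← htot]
    exact mul_le_mul_right hWle _

lemma crit_col (hdef : maxCycleMean A = 1) {i j : Fin n} (h : criticalEdge A i j)
    (k : Fin n) : A i j * klStar A j k = klStar A i k := by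
  apply le_antisymm (mul_klStar_le A hdef i j k)
  calc klStar A i k = (A i j * klStar A j i) * klStar A i k := by
        rw [crit_one A hdef h, one_mul]
    _ = A i j * (klStar A j i * klStar A i k) := by ring
    _ ≤ A i j * klStar A j k := mul_le_mul_right (klStar_trans A hdef j i k) _

lemma noncrit_lt (hdef : maxCycleMean A = 1) {i j : Fin n}
    (h : ¬ criticalEdge A i j) : A i j * klStar A j i < 1 := by
  refine lt_of_le_of_ne ?_ ?_
  · calc A i j * klStar A j i ≤ klStar A i i := mul_klStar_le A hdef i j i
      _ = 1 := klStar_diag A hdef i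
  intro heq
  apply h
  rcases klStar_walk A j i with h0 | ⟨w, hwh, hwl, hwp⟩
  · rw [h0, mul_zero] at heq; exact absurd heq zero_ne_one
  have hclosed : A i j * chainProd A w = 1 := by rw [hwp]; exact heq
  cases w with
  | nil => simp at hwh
  | cons b w' =>
    simp only [List.head?_cons, Option.some.injEq] at hwh
    have hwh' := hwh.symm
    subst hwh'
    cases w' with
    | nil =>
      -- w = [j], so j = i and A i i = 1
      have hji : j = i := by simpa using hwl
      subst hji
      have hAii : A j j = 1 := by simpa using hclosed
      refine ⟨[j], by simp, ?_, ?_⟩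
      · have hcw : cycleWeight A [j] = 1 := by
          rw [cycleWeight_eq_chainProd A j []]
          simp [hAii]
        rw [cycleMean, hcw, NNReal.one_rpow, hdef]
      · rw [List.rotate_singleton]
        simp
    | cons y w'' =>
      have hne2 : (y :: w'') ≠ [] := by simp
      have hgl : (y :: w'').getLast hne2 = i := by
        have h1 := List.getLast?_eq_some_getLast (l := j :: y :: w'') (by simp)
        rw [h1] at hwl
        have h2 : (j :: y :: w'').getLast (by simp) = (y :: w'').getLast hne2 :=
          List.getLast_cons hne2
        rw [h2] at hwl
        exact (Option.some.injEq _ _).mp hwl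
      have hdrop : (y :: w'').dropLast ++ [i] = y :: w'' := by
        conv_rhs => rw [← List.dropLast_append_getLast hne2, hgl]
      refine ⟨i :: j :: (y :: w'').dropLast, by simp, ?_, ?_⟩
      · have hcw : cycleWeight A (i :: j :: (y :: w'').dropLast) = 1 := by
          rw [cycleWeight_eq_chainProd]
          have : (i :: j :: (y :: w'').dropLast) ++ [i]
              = i :: j :: ((y :: w'').dropLast ++ [i]) := by simp
          rw [this, hdrop, chainProd_cons_cons]
          exact hclosed
        rw [cycleMean, hcw, NNReal.one_rpow, hdef]
      · rw [show (1 : ℕ) = 0 + 1 from rfl, List.rotate_cons_succ, List.rotate_zero]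
        simp only [List.zip_cons_cons, List.cons_append, List.mem_cons]
        left; trivial

lemma prod_rpow_const {ι : Type*} (a : NNReal) (ha : a ≠ 0) (c : ι → ℝ) (s : Finset ι) :
    ∏ k ∈ s, a ^ (c k) = a ^ (∑ k ∈ s, c k) := by
  classical
  induction s using Finset.induction with
  | empty => simp
  | insert _ _ hnotmem ih =>
    rw [Finset.prod_insert hnotmem, Finset.sum_insert hnotmem, NNReal.rpow_add ha, ih]

end Aux

/-- for definite irreducible `A`, a positive log-convex
combination `x` of all columns of `A*` gives a strict visualization `X⁻¹AX`. -/
theorem stmt_16 {n : ℕ} (A : Matrix (Fin n) (Fin n) NNReal)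
    (hdef : maxCycleMean A = 1)
    (hirr : ∀ i j : Fin n, i ≠ j → ∃ k : ℕ, 0 < mPow A k i j)
    (c : Fin n → ℝ) (hc : ∀ k, 0 < c k) (hsum : (∑ k, c k) = 1)
    (x : Fin n → NNReal) (hx : ∀ i, x i = ∏ k, (klStar A i k) ^ (c k)) :
    (∀ i, 0 < x i) ∧
    (∀ i j, criticalEdge A i j → (x i)⁻¹ * A i j * x j = 1) ∧
    (∀ i j, ¬ criticalEdge A i j → (x i)⁻¹ * A i j * x j < 1) := by
  have hpos : ∀ i, 0 < x i := by
    intro i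
    rw [hx i]
    rw [CanonicallyOrderedAdd.prod_pos]
    intro k _
    exact NNReal.rpow_pos (klStar_pos A hdef hirr i k)
  refine ⟨hpos, ?_, ?_⟩
  · intro i j hcrit
    have hxi0 : x i ≠ 0 := (hpos i).ne'
    have hA0 : A i j ≠ 0 := by
      intro h0
      have := crit_one A hdef hcrit
      rw [h0, zero_mul] at this
      exact zero_ne_one this
    have key : A i j * x j = x i := by
      rw [hx i, hx j]
      calc A i j * ∏ k, (klStar A j k) ^ (c k)
          = (∏ k, (A i j) ^ (c k)) * ∏ k, (klStar A j k) ^ (c k) := by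
            rw [prod_rpow_const (A i j) hA0 c Finset.univ, hsum, NNReal.rpow_one]
        _ = ∏ k, ((A i j) ^ (c k) * (klStar A j k) ^ (c k)) := by
            rw [Finset.prod_mul_distrib]
        _ = ∏ k, (A i j * klStar A j k) ^ (c k) := by
            simp [NNReal.mul_rpow]
        _ = ∏ k, (klStar A i k) ^ (c k) := by
            apply Finset.prod_congr rfl
            intro k _
            rw [crit_col A hdef hcrit k]
    rw [mul_assoc, key, inv_mul_cancel₀ hxi0]
  · intro i j hnc
    have hxi0 : x i ≠ 0 := (hpos i).ne'
    have hkey : A i j * x j < x i := by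
      by_cases hA0 : A i j = 0
      · rw [hA0, zero_mul]; exact hpos i
      · rw [hx i, hx j]
        have lhs : A i j * ∏ k, (klStar A j k) ^ (c k)
            = ∏ k, (A i j * klStar A j k) ^ (c k) := by
          calc A i j * ∏ k, (klStar A j k) ^ (c k)
              = (∏ k, (A i j) ^ (c k)) * ∏ k, (klStar A j k) ^ (c k) := by
                rw [prod_rpow_const (A i j) hA0 c Finset.univ, hsum, NNReal.rpow_one]
            _ = ∏ k, ((A i j) ^ (c k) * (klStar A j k) ^ (c k)) := by
                rw [Finset.prod_mul_distrib]
            _ = ∏ k, (A i j * klStar A j k) ^ (c k) := by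
                simp [NNReal.mul_rpow]
        rw [lhs]
        apply Finset.prod_lt_prod
        · intro k _
          apply NNReal.rpow_pos
          exact mul_pos (pos_iff_ne_zero.mpr hA0) (klStar_pos A hdef hirr j k)
        · intro k _
          exact NNReal.rpow_le_rpow (mul_klStar_le A hdef i j k) (hc k).le
        · refine ⟨i, Finset.mem_univ i, ?_⟩
          apply NNReal.rpow_lt_rpow ?_ (hc i)
          rw [klStar_diag A hdef i]
          exact noncrit_lt A hdef hnc
    rw [mul_assoc]
    calc (x i)⁻¹ * (A i j * x j) < (x i)⁻¹ * x i := by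
          apply mul_lt_mul_of_pos_left hkey
          simp [pos_iff_ne_zero, hxi0]
      _ = 1 := inv_mul_cancel₀ hxi0
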